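/- Let n ≥ 2 and let a₁, …, aₙ be positive integers admitting a partition, i.e., there exists a subset I ⊆ {1,…,n} with ∑_{i∈I} aᵢ = ∑_{i∉I} aᵢ. Then the weighted cycle on vertices {1,…,n}, whose edges are {i−1,i} with weight aᵢ for 1 < i ≤ n together with the edge {1,n} with weight a₁, admits a realization on the real line: there exists x : {1,…,n} → ℝ such that |x_{i−1} − x_i| = aᵢ for all 1 < i ≤ n and |x₁ − xₙ| = a₁. -/

import Mathlib

/-- Forward direction of Saxe's reduction: a YES instance of Partition yields a
realization of the weighted cycle on the real line. -/
theorem partition_yields_cycle_realization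
    (n : ℕ) (hn : 2 ≤ n) (a : ℕ → ℤ)
    (hpos : ∀ i ∈ Finset.Icc 1 n, 0 < a i)
    (I : Finset ℕ) (hI : I ⊆ Finset.Icc 1 n)
    (hpart : ∑ i ∈ I, a i = ∑ i ∈ Finset.Icc 1 n \ I, a i) :
    ∃ x : ℕ → ℝ,
      (∀ i, 1 < i → i ≤ n → |x (i - 1) - x i| = (a i : ℝ)) ∧
      |x 1 - x n| = (a 1 : ℝ) := by
  set ε : ℕ → ℝ := fun j => if j ∈ I then (1:ℝ) else -1 with hε
  refine ⟨fun k => ∑ j ∈ Finset.Icc 1 k, ε j * (a j : ℝ), ?_, ?_⟩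
  · intro i h1 h2
    have hi : i - 1 + 1 = i := Nat.sub_add_cancel (by omega : 1 ≤ i)
    have hstep : ∑ j ∈ Finset.Icc 1 (i-1+1), ε j * (a j : ℝ)
        = (∑ j ∈ Finset.Icc 1 (i-1), ε j * (a j : ℝ)) + ε (i-1+1) * a (i-1+1) :=
      Finset.sum_Icc_succ_top (by omega) _
    rw [hi] at hstep
    show |∑ j ∈ Finset.Icc 1 (i-1), ε j * (a j : ℝ) - ∑ j ∈ Finset.Icc 1 i, ε j * (a j : ℝ)| = (a i : ℝ)
    rw [hstep]
    have hai : 0 < a i := hpos i (Finset.mem_Icc.mpr ⟨by omega, h2⟩)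
    have habs : |ε i * (a i : ℝ)| = (a i : ℝ) := by
      rcases ite_eq_or_eq (i ∈ I) (1:ℝ) (-1) with h | h <;>
        simp [hε, h, abs_of_pos (Int.cast_pos.mpr hai)]
    have hre : ∑ j ∈ Finset.Icc 1 (i-1), ε j * (a j : ℝ)
        - (∑ j ∈ Finset.Icc 1 (i-1), ε j * (a j : ℝ) + ε i * a i)
        = -(ε i * a i) := by ring
    rw [hre, abs_neg, habs]
  · have hxn : ∑ j ∈ Finset.Icc 1 n, ε j * (a j : ℝ) = 0 := by
      rw [← Finset.sum_sdiff hI]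
      have h1 : ∑ j ∈ Finset.Icc 1 n \ I, ε j * (a j : ℝ)
          = -∑ j ∈ Finset.Icc 1 n \ I, (a j : ℝ) := by
        rw [← Finset.sum_neg_distrib]
        refine Finset.sum_congr rfl fun j hj => ?_
        have : j ∉ I := (Finset.mem_sdiff.mp hj).2
        simp [hε, this]
      have h2 : ∑ j ∈ I, ε j * (a j : ℝ) = ∑ j ∈ I, (a j : ℝ) := by
        refine Finset.sum_congr rfl fun j hj => ?_
        simp [hε, hj]
      rw [h1, h2]
      have := congrArg (fun z : ℤ => (z : ℝ)) hpart
      push_cast at this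
      linarith
    show |∑ j ∈ Finset.Icc 1 1, ε j * (a j : ℝ) - ∑ j ∈ Finset.Icc 1 n, ε j * (a j : ℝ)| = (a 1 : ℝ)
    rw [hxn]
    have ha1 : 0 < a 1 := hpos 1 (Finset.mem_Icc.mpr ⟨le_refl 1, by omega⟩)
    have hs1 : ∑ j ∈ Finset.Icc 1 1, ε j * (a j : ℝ) = ε 1 * a 1 := by simp
    rw [hs1, sub_zero]
    rcases ite_eq_or_eq (1 ∈ I) (1:ℝ) (-1) with h | h <;>
      simp [hε, h, abs_of_pos (Int.cast_pos.mpr ha1)]
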